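/- Let Y be a compact regular Hausdorff space and f : X → Y a function, and let Z = cl(gr(f)) ⊆ X × Y be the closure of the graph of f. Then f is globally multi-split continuous if and only if the projection π : X × Y → X restricted to Z is finite-to-one (i.e. every fiber of π|_Z is finite). -/

import Mathlib

open Filter Topology Set

universe u v w

variable {X : Type u} {Y : Type v} [TopologicalSpace X] [TopologicalSpace Y]

/-- `Z` is a set of extended values of `f` at `p`. -/
def ExtendedValues (f : X → Y) (p : X) (Z : Set Y) : Prop :=
  Z.Finite ∧ Z.Nonempty ∧
    (∀ y ∈ Z, ∀ U ∈ 𝓝 p, ∀ V ∈ 𝓝 y, (f '' U ∩ V).Nonempty) ∧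
    (∀ V ∈ 𝓝ˢ Z, ∃ U ∈ 𝓝 p, f '' U ⊆ V)

/-- `f` is multi-split continuous at `p`. -/
def MultiSplitAt (f : X → Y) (p : X) : Prop := ∃ Z : Set Y, ExtendedValues f p Z

lemma mem_cl_graph_iff {f : X → Y} {p : X} {y : Y} :
    (p, y) ∈ closure {q : X × Y | q.2 = f q.1} ↔
      ∀ U ∈ 𝓝 p, ∀ V ∈ 𝓝 y, (f '' U ∩ V).Nonempty := by
  rw [mem_closure_iff_nhds]
  constructor
  · intro h U hU V hV
    obtain ⟨q, hq1, hq2⟩ := h (U ×ˢ V) (prod_mem_nhds hU hV)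
    exact ⟨f q.1, ⟨q.1, hq1.1, rfl⟩, hq2 ▸ hq1.2⟩
  · intro h t ht
    rw [nhds_prod_eq, Filter.mem_prod_iff] at ht
    obtain ⟨U, hU, V, hV, hUV⟩ := ht
    obtain ⟨_, ⟨x, hx, rfl⟩, hfx⟩ := h U hU V hV
    exact ⟨(x, f x), hUV ⟨hx, hfx⟩, rfl⟩

theorem stmt16 [CompactSpace Y] [T3Space Y] (f : X → Y) :
    (∀ p : X, MultiSplitAt f p) ↔
      ∀ x : X, {q ∈ closure {q : X × Y | q.2 = f q.1} | q.1 = x}.Finite := by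
  constructor
  · intro h p
    obtain ⟨Z, hfin, hne, hc, hd⟩ := h p
    refine ((hfin.image (fun y => (p, y)))).subset ?_
    rintro ⟨x, y⟩ ⟨hcl, rfl⟩
    simp only [mem_image]
    refine ⟨y, ?_, rfl⟩
    by_contra hy
    have hycl : y ∉ closure Z := by
      rwa [hfin.isClosed.closure_eq]
    have hdis : Disjoint (𝓝ˢ Z) (𝓝 y) := disjoint_nhdsSet_nhds.mpr hycl
    obtain ⟨V, hV, W, hW, hVW⟩ := Filter.disjoint_iff.mp hdis
    obtain ⟨U, hU, hUV⟩ := hd V hV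
    obtain ⟨z, hz1, hz2⟩ := mem_cl_graph_iff.mp hcl U hU W hW
    exact Set.disjoint_left.mp hVW (hUV hz1) hz2
  · intro h p
    set F : Set Y := {y | (p, y) ∈ closure {q : X × Y | q.2 = f q.1}} with hF
    have hFfin : F.Finite := by
      have : F ⊆ Prod.snd '' {q ∈ closure {q : X × Y | q.2 = f q.1} | q.1 = p} := by
        intro y hy
        exact ⟨(p, y), ⟨hy, rfl⟩, rfl⟩
      exact ((h p).image _).subset this
    have hmapne : (Filter.map f (𝓝 p)).NeBot := Filter.map_neBot
    have hclus : ∀ y : Y, ClusterPt y (Filter.map f (𝓝 p)) → y ∈ F := by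
      intro y hy
      rw [hF, mem_setOf_eq, mem_cl_graph_iff]
      intro U hU V hV
      have hfU : f '' U ∈ Filter.map f (𝓝 p) :=
        Filter.mem_map.mpr (Filter.mem_of_superset hU (subset_preimage_image f U))
      obtain ⟨z, hz1, hz2⟩ := (clusterPt_iff_nonempty.mp hy hV hfU)
      exact ⟨z, hz2, hz1⟩
    refine ⟨F, hFfin, ?_, ?_, ?_⟩
    · obtain ⟨y, hy⟩ := exists_clusterPt_of_compactSpace (Filter.map f (𝓝 p))
      exact ⟨y, hclus y hy⟩
    · intro y hy U hU V hV
      exact mem_cl_graph_iff.mp hy U hU V hV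
    · intro V hV
      by_contra hcon
      push_neg at hcon
      have hne : ∀ s ∈ Filter.map f (𝓝 p), (s ∩ Vᶜ).Nonempty := by
        intro s hs
        obtain ⟨z, hz1, hz2⟩ := Set.not_subset.mp (hcon (f ⁻¹' s) (Filter.mem_map.mp hs))
        obtain ⟨x', hx', rfl⟩ := hz1
        exact ⟨f x', hx', hz2⟩
      have hnb : (Filter.map f (𝓝 p) ⊓ 𝓟 Vᶜ).NeBot :=
        Filter.inf_principal_neBot_iff.mpr hne
      obtain ⟨y, hy⟩ := exists_clusterPt_of_compactSpace (Filter.map f (𝓝 p) ⊓ 𝓟 Vᶜ)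
      have hy1 : y ∈ F := hclus y (hy.mono inf_le_left)
      have hy2 : y ∈ closure Vᶜ :=
        mem_closure_iff_clusterPt.mpr (hy.mono inf_le_right)
      have hyint : y ∈ interior V := subset_interior_iff_mem_nhdsSet.mpr hV hy1
      obtain ⟨z, hz1, hz2⟩ := mem_closure_iff_nhds.mp hy2 (interior V)
        (isOpen_interior.mem_nhds hyint)
      exact hz2 (interior_subset hz1)
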